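/- Let m > 0, V > 0, ω(k) = √(‖k‖² + m²), and let ψ ∈ L²(ℝ³; ℂ) be such that the function k ↦ ω(k)·ψ(k) is also in L²(ℝ³; ℂ). Then the function k ↦ (ω(q_V(k)) − ω(k))·ψ(k) is in L²(ℝ³; ℂ) and its L² norm is at most (√3·π/(V·m)) times the L² norm of ω·ψ; in particular, for fixed ψ this norm tends to 0 as V → ∞. -/

import Mathlib

open MeasureTheory

/-- The nearest lattice point `q_V(k)` of the momentum lattice `Γ_V`, defined
componentwise by `q_V(k)_j = (2π/V)·⌊V·k_j/(2π) + 1/2⌋`. -/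
noncomputable def qV (V : ℝ) (k : EuclideanSpace ℝ (Fin 3)) :
    EuclideanSpace ℝ (Fin 3) :=
  WithLp.toLp 2 (fun j => (2 * Real.pi / V) * (⌊V * k j / (2 * Real.pi) + 1 / 2⌋ : ℤ))

/-- The Klein–Gordon one-particle energy `ω(k) = √(‖k‖² + m²)`. -/
noncomputable def omegaKG (m : ℝ) (k : EuclideanSpace ℝ (Fin 3)) : ℝ :=
  Real.sqrt (‖k‖ ^ 2 + m ^ 2)

lemma sqrt_add_sq_aux {s t c : ℝ} (hs : 0 ≤ s) (ht : 0 ≤ t) (hc : 0 ≤ c) :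
    Real.sqrt ((s + t) ^ 2 + c) ≤ Real.sqrt (s ^ 2 + c) + t := by
  have h1 : s ≤ Real.sqrt (s ^ 2 + c) := by
    rw [show s = Real.sqrt (s ^ 2) by rw [Real.sqrt_sq hs]]
    exact Real.sqrt_le_sqrt (by nlinarith [Real.sq_sqrt (by positivity : (0:ℝ) ≤ s^2)])
  have hsq : Real.sqrt (s ^ 2 + c) ^ 2 = s ^ 2 + c := Real.sq_sqrt (by positivity)
  have h2 : (s + t) ^ 2 + c ≤ (Real.sqrt (s ^ 2 + c) + t) ^ 2 := by nlinarith
  calc Real.sqrt ((s + t) ^ 2 + c) ≤ Real.sqrt ((Real.sqrt (s ^ 2 + c) + t) ^ 2) :=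
        Real.sqrt_le_sqrt h2
    _ = Real.sqrt (s ^ 2 + c) + t := Real.sqrt_sq (by positivity)

lemma omegaKG_lip (m : ℝ) (x y : EuclideanSpace ℝ (Fin 3)) :
    |omegaKG m x - omegaKG m y| ≤ ‖x - y‖ := by
  have key : ∀ a b : EuclideanSpace ℝ (Fin 3),
      omegaKG m a ≤ omegaKG m b + ‖a - b‖ := by
    intro a b
    have h : ‖a‖ ≤ ‖b‖ + ‖a - b‖ := by
      have := norm_sub_norm_le a b; linarith
    unfold omegaKG
    calc Real.sqrt (‖a‖ ^ 2 + m ^ 2)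
        ≤ Real.sqrt ((‖b‖ + ‖a - b‖) ^ 2 + m ^ 2) :=
          Real.sqrt_le_sqrt (by nlinarith [norm_nonneg a, norm_nonneg b, norm_nonneg (a - b), h])
      _ ≤ Real.sqrt (‖b‖ ^ 2 + m ^ 2) + ‖a - b‖ :=
          sqrt_add_sq_aux (norm_nonneg b) (norm_nonneg (a - b)) (sq_nonneg m)
  rw [abs_sub_le_iff]
  refine ⟨by linarith [key x y], ?_⟩
  have := key y x
  rw [norm_sub_rev] at this
  linarith

lemma qV_dist {V : ℝ} (hV : 0 < V) (k : EuclideanSpace ℝ (Fin 3)) :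
    ‖qV V k - k‖ ≤ Real.sqrt 3 * Real.pi / V := by
  have hpi := Real.pi_pos
  have hcomp : ∀ j : Fin 3, |qV V k j - k j| ≤ Real.pi / V := by
    intro j
    set x := V * k j / (2 * Real.pi) with hx
    have hq : qV V k j = (2 * Real.pi / V) * (⌊x + 1 / 2⌋ : ℤ) := rfl
    have hk : k j = (2 * Real.pi / V) * x := by
      rw [hx]; field_simp
    have h1 : (⌊x + 1 / 2⌋ : ℝ) ≤ x + 1 / 2 := Int.floor_le _
    have h2 : x - 1 / 2 ≤ (⌊x + 1 / 2⌋ : ℝ) := by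
      have := Int.lt_floor_add_one (x + 1 / 2); linarith
    have hd : qV V k j - k j = (2 * Real.pi / V) * ((⌊x + 1 / 2⌋ : ℝ) - x) := by
      rw [hq, hk]; ring
    have hpos : (0:ℝ) < 2 * Real.pi / V := by positivity
    rw [hd, abs_mul, abs_of_pos hpos]
    have habs : |(⌊x + 1 / 2⌋ : ℝ) - x| ≤ 1 / 2 := abs_le.mpr ⟨by linarith, by linarith⟩
    calc 2 * Real.pi / V * |(⌊x + 1 / 2⌋ : ℝ) - x|
        ≤ 2 * Real.pi / V * (1 / 2) := by
          exact mul_le_mul_of_nonneg_left habs hpos.le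
      _ = Real.pi / V := by ring
  have hnorm : ‖qV V k - k‖ = Real.sqrt (∑ j, ‖(qV V k - k) j‖ ^ 2) :=
    EuclideanSpace.norm_eq _
  rw [hnorm]
  have hsum : (∑ j, ‖(qV V k - k) j‖ ^ 2) ≤ 3 * (Real.pi / V) ^ 2 := by
    have hterm : ∀ j : Fin 3, ‖(qV V k - k) j‖ ^ 2 ≤ (Real.pi / V) ^ 2 := by
      intro j
      have hj : (qV V k - k) j = qV V k j - k j := rfl
      rw [hj, Real.norm_eq_abs]
      have := hcomp j
      nlinarith [abs_nonneg (qV V k j - k j)]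
    calc (∑ j, ‖(qV V k - k) j‖ ^ 2) ≤ ∑ _j : Fin 3, (Real.pi / V) ^ 2 :=
          Finset.sum_le_sum fun j _ => hterm j
      _ = 3 * (Real.pi / V) ^ 2 := by simp
  calc Real.sqrt (∑ j, ‖(qV V k - k) j‖ ^ 2)
      ≤ Real.sqrt (3 * (Real.pi / V) ^ 2) := Real.sqrt_le_sqrt hsum
    _ = Real.sqrt 3 * (Real.pi / V) := by
        rw [Real.sqrt_mul (by norm_num), Real.sqrt_sq (by positivity)]
    _ = Real.sqrt 3 * Real.pi / V := by ring

/-- Let `m > 0` and `ψ ∈ L²(ℝ³;ℂ)` with `ω·ψ ∈ L²(ℝ³;ℂ)`.  Then for every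
`V > 0` the function `k ↦ (ω(q_V(k)) − ω(k))·ψ(k)` is in `L²(ℝ³;ℂ)` with
`L²`-norm at most `(√3·π/(V·m))` times the `L²`-norm of `ω·ψ`; in particular
this norm tends to `0` as `V → ∞`. -/
theorem eLpNorm_omegaKG_qV_sub_omegaKG_mul_le (m : ℝ) (hm : 0 < m)
    (ψ : EuclideanSpace ℝ (Fin 3) → ℂ)
    (hψ : MemLp ψ 2 volume)
    (hωψ : MemLp (fun k => (omegaKG m k : ℂ) * ψ k) 2 volume) :
    (∀ V : ℝ, 0 < V →
      MemLp (fun k => ((omegaKG m (qV V k) - omegaKG m k : ℝ) : ℂ) * ψ k) 2 volume ∧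
      eLpNorm (fun k => ((omegaKG m (qV V k) - omegaKG m k : ℝ) : ℂ) * ψ k) 2 volume ≤
        ENNReal.ofReal (Real.sqrt 3 * Real.pi / (V * m)) *
          eLpNorm (fun k => (omegaKG m k : ℂ) * ψ k) 2 volume) ∧
    Filter.Tendsto
      (fun V : ℝ =>
        (eLpNorm (fun k => ((omegaKG m (qV V k) - omegaKG m k : ℝ) : ℂ) * ψ k) 2
          volume).toReal)
      Filter.atTop (nhds 0) := by
  have hpi := Real.pi_pos
  have hωcont : Continuous (omegaKG m) := by
    unfold omegaKG
    exact Real.continuous_sqrt.comp (by continuity)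
  have hωlb : ∀ k, m ≤ omegaKG m k := by
    intro k
    unfold omegaKG
    calc m = Real.sqrt (m ^ 2) := (Real.sqrt_sq hm.le).symm
      _ ≤ Real.sqrt (‖k‖ ^ 2 + m ^ 2) := Real.sqrt_le_sqrt (by nlinarith [sq_nonneg ‖k‖])
  have main : ∀ V : ℝ, 0 < V →
      MemLp (fun k => ((omegaKG m (qV V k) - omegaKG m k : ℝ) : ℂ) * ψ k) 2 volume ∧
      eLpNorm (fun k => ((omegaKG m (qV V k) - omegaKG m k : ℝ) : ℂ) * ψ k) 2 volume ≤
        ENNReal.ofReal (Real.sqrt 3 * Real.pi / (V * m)) *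
          eLpNorm (fun k => (omegaKG m k : ℂ) * ψ k) 2 volume := by
    intro V hV
    set C : ℝ := Real.sqrt 3 * Real.pi / (V * m) with hC
    have hCpos : 0 < C := by positivity
    -- measurability
    have hqVmeas : Measurable (qV V) := by
      change Measurable (WithLp.toLp 2 ∘ fun k (j : Fin 3) => (qV V k) j)
      refine (WithLp.measurable_toLp 2 (Fin 3 → ℝ)).comp (measurable_pi_lambda _ ?_)
      intro j
      have h0 : Measurable fun k : EuclideanSpace ℝ (Fin 3) => k j :=
        (measurable_pi_apply j).comp (WithLp.measurable_ofLp 2 _)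
      have h1 : Measurable fun k : EuclideanSpace ℝ (Fin 3) =>
          V * k j / (2 * Real.pi) + 1 / 2 :=
        ((h0.const_mul V).div_const (2 * Real.pi)).add_const (1 / 2)
      exact measurable_const.mul (measurable_from_top.comp h1.floor)
    have haem : AEStronglyMeasurable
        (fun k => ((omegaKG m (qV V k) - omegaKG m k : ℝ) : ℂ) * ψ k) volume := by
      refine AEStronglyMeasurable.mul ?_ hψ.1
      exact (Complex.measurable_ofReal.comp
        (((hωcont.measurable.comp hqVmeas).sub hωcont.measurable))).aestronglyMeasurable
    -- pointwise bound
    have hbound : ∀ k, ‖((omegaKG m (qV V k) - omegaKG m k : ℝ) : ℂ) * ψ k‖ ≤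
        ‖((C : ℂ)) * ((omegaKG m k : ℂ) * ψ k)‖ := by
      intro k
      have h1 : |omegaKG m (qV V k) - omegaKG m k| ≤ Real.sqrt 3 * Real.pi / V := by
        calc |omegaKG m (qV V k) - omegaKG m k| ≤ ‖qV V k - k‖ := omegaKG_lip m _ _
          _ ≤ Real.sqrt 3 * Real.pi / V := qV_dist hV k
      have h2 : Real.sqrt 3 * Real.pi / V = C * m := by
        rw [hC]; field_simp
      have h3 : |omegaKG m (qV V k) - omegaKG m k| ≤ C * omegaKG m k := by
        rw [h2] at h1
        calc |omegaKG m (qV V k) - omegaKG m k| ≤ C * m := h1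
          _ ≤ C * omegaKG m k := mul_le_mul_of_nonneg_left (hωlb k) hCpos.le
      have hω0 : 0 ≤ omegaKG m k := Real.sqrt_nonneg _
      simp only [norm_mul, Complex.norm_real, Real.norm_eq_abs]
      have : |C| * (|omegaKG m k| * ‖ψ k‖) = (C * omegaKG m k) * ‖ψ k‖ := by
        rw [abs_of_pos hCpos, abs_of_nonneg hω0]; ring
      rw [this]
      exact mul_le_mul_of_nonneg_right h3 (norm_nonneg _)
    have hmem : MemLp (fun k => ((omegaKG m (qV V k) - omegaKG m k : ℝ) : ℂ) * ψ k)
        2 volume :=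
      (hωψ.const_mul (C : ℂ)).of_le haem (Filter.Eventually.of_forall hbound)
    refine ⟨hmem, ?_⟩
    calc eLpNorm (fun k => ((omegaKG m (qV V k) - omegaKG m k : ℝ) : ℂ) * ψ k) 2 volume
        ≤ eLpNorm (fun k => ((C : ℂ)) * ((omegaKG m k : ℂ) * ψ k)) 2 volume :=
          eLpNorm_mono hbound
      _ = eLpNorm ((C : ℂ) • fun k => (omegaKG m k : ℂ) * ψ k) 2 volume := by
          congr 1
      _ = (‖(C : ℂ)‖₊ : ENNReal) *
            eLpNorm (fun k => (omegaKG m k : ℂ) * ψ k) 2 volume :=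
          eLpNorm_const_smul _ _ _ _
      _ = ENNReal.ofReal C * eLpNorm (fun k => (omegaKG m k : ℂ) * ψ k) 2 volume := by
          congr 1
          rw [Complex.nnnorm_real, ← enorm_eq_nnnorm, Real.enorm_eq_ofReal hCpos.le]
  refine ⟨main, ?_⟩
  -- the limit
  set N : ℝ := (eLpNorm (fun k => (omegaKG m k : ℂ) * ψ k) 2 volume).toReal with hN
  have hfin : eLpNorm (fun k => (omegaKG m k : ℂ) * ψ k) 2 volume ≠ ⊤ := hωψ.2.ne
  have hub : ∀ᶠ V : ℝ in Filter.atTop,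
      (eLpNorm (fun k => ((omegaKG m (qV V k) - omegaKG m k : ℝ) : ℂ) * ψ k) 2
        volume).toReal ≤ Real.sqrt 3 * Real.pi / (V * m) * N := by
    filter_upwards [Filter.eventually_gt_atTop (0 : ℝ)] with V hV
    have h := (main V hV).2
    have hRHS : ENNReal.ofReal (Real.sqrt 3 * Real.pi / (V * m)) *
        eLpNorm (fun k => (omegaKG m k : ℂ) * ψ k) 2 volume ≠ ⊤ :=
      ENNReal.mul_ne_top ENNReal.ofReal_ne_top hfin
    have := ENNReal.toReal_mono hRHS h
    rwa [ENNReal.toReal_mul, ENNReal.toReal_ofReal (by positivity)] at this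
  have hlim : Filter.Tendsto (fun V : ℝ => Real.sqrt 3 * Real.pi / (V * m) * N)
      Filter.atTop (nhds 0) := by
    have heq : (fun V : ℝ => Real.sqrt 3 * Real.pi / (V * m) * N) =
        fun V : ℝ => (Real.sqrt 3 * Real.pi / m * N) * V⁻¹ := by
      funext V
      rw [div_eq_mul_inv, div_eq_mul_inv, mul_inv]
      ring
    rw [heq]
    simpa using tendsto_inv_atTop_zero.const_mul (Real.sqrt 3 * Real.pi / m * N)
  exact squeeze_zero' (Filter.Eventually.of_forall fun V => ENNReal.toReal_nonneg)
    hub hlim
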